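/- Let δ ∈ ℂ be an algebraic number with |δ| = 1 and let ε₁, ε₂ be the two roots of x² - c·x + δ = 0 where c ∈ ℂ satisfies that k := c²/δ - 2 is real with |k| < 2. Then |ε₁| = |ε₂| = 1. -/

import Mathlib

lemma aux_unit_quad (k : ℝ) (hk2 : |k| < 2) (e : ℂ)
    (h : e ^ 2 - (k : ℂ) * e + 1 = 0) : ‖e‖ = 1 := by
  obtain ⟨hk1, hk2'⟩ := abs_lt.mp hk2
  set a := e.re
  set b := e.im
  have hre : a ^ 2 - b ^ 2 - k * a + 1 = 0 := by
    have := congrArg Complex.re h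
    simp [Complex.ext_iff, pow_two, Complex.mul_re, Complex.mul_im] at this ⊢
    ring_nf
    ring_nf at this
    linarith [this]
  have him : b * (2 * a - k) = 0 := by
    have := congrArg Complex.im h
    simp [pow_two, Complex.mul_re, Complex.mul_im] at this
    ring_nf
    ring_nf at this
    linarith [this]
  have hab : a ^ 2 + b ^ 2 = 1 := by
    rcases mul_eq_zero.mp him with hb | ha
    · exfalso
      rw [hb] at hre
      nlinarith [sq_nonneg (a - k / 2), sq_nonneg k]
    · have ha' : a = k / 2 := by linarith
      rw [ha'] at hre ⊢
      nlinarith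
  have hsq : ‖e‖ ^ 2 = 1 := by
    rw [Complex.sq_norm, Complex.normSq_apply]
    nlinarith [hab]
  nlinarith [norm_nonneg e, hsq]

theorem roots_on_unit_circle_of_real_trace
    (δ c : ℂ) (halg : IsAlgebraic ℚ δ) (hδ : ‖δ‖ = 1)
    (k : ℝ) (hk : (c ^ 2 / δ - 2 : ℂ) = (k : ℂ)) (hk2 : |k| < 2)
    (ε₁ ε₂ : ℂ) (hsum : ε₁ + ε₂ = c) (hprod : ε₁ * ε₂ = δ) :
    ‖ε₁‖ = 1 ∧ ‖ε₂‖ = 1 := by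
  have hδ0 : δ ≠ 0 := by
    intro h; rw [h] at hδ; simp at hδ
  have hε₁ : ε₁ ≠ 0 := fun h => hδ0 (by rw [← hprod, h, zero_mul])
  have hε₂ : ε₂ ≠ 0 := fun h => hδ0 (by rw [← hprod, h, mul_zero])
  have hksum : (ε₁ ^ 2 / δ) + (ε₂ ^ 2 / δ) = (k : ℂ) := by
    rw [← hk, ← hsum, ← hprod]
    field_simp
    ring
  have hkprod : (ε₁ ^ 2 / δ) * (ε₂ ^ 2 / δ) = 1 := by
    field_simp
    rw [← hprod]; ring
  have key : ∀ e : ℂ, e ^ 2 - (k : ℂ) * e + 1 = 0 → ‖e‖ = 1 :=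
    fun e h => aux_unit_quad k hk2 e h
  have h1 : ‖ε₁ ^ 2 / δ‖ = 1 := by
    apply key
    have : (ε₁ ^ 2 / δ) ^ 2 - ((ε₁ ^ 2 / δ) + (ε₂ ^ 2 / δ)) * (ε₁ ^ 2 / δ)
        + (ε₁ ^ 2 / δ) * (ε₂ ^ 2 / δ) = 0 := by ring
    rw [hksum, hkprod] at this
    exact this
  have h2 : ‖ε₂ ^ 2 / δ‖ = 1 := by
    apply key
    have : (ε₂ ^ 2 / δ) ^ 2 - ((ε₁ ^ 2 / δ) + (ε₂ ^ 2 / δ)) * (ε₂ ^ 2 / δ)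
        + (ε₁ ^ 2 / δ) * (ε₂ ^ 2 / δ) = 0 := by ring
    rw [hksum, hkprod] at this
    exact this
  have habs : ∀ ε : ℂ, ‖ε ^ 2 / δ‖ = 1 → ‖ε‖ = 1 := by
    intro ε h
    rw [norm_div, norm_pow, hδ, div_one] at h
    nlinarith [norm_nonneg ε]
  exact ⟨habs ε₁ h1, habs ε₂ h2⟩
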